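/- arXiv:2006.06834 — 2 statements merged into one kernel-verified Lean document; each statement's English description precedes it below -/
import Mathlib

section
/- Let d, m be positive integers, α ∈ (1/2, 1], β ∈ ℝ, Z > 0, and let p ∈ ℝ^d be a unit vector. If t is sampled from the standard Gaussian measure γ_d on ℝ^d, then the vector-valued expectation E[(α · m · exp(β⟨t, p⟩)/Z + (1 − α)) · t] equals ρ · p, where ρ = m·α·β·exp(β^2/2)/Z. In particular the uniform (noise) component of the AttEST mixture contributes zero to the mean, and the mean of a trigram sampled at position i of a query (with the partition function replaced by its concentrated value Z_i) is ρ_i · p with ρ_i = m·α_i·β_i·exp(β_i^2/2)/Z_i. -/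
open MeasureTheory ProbabilityTheory Real
open scoped ENNReal NNReal

/-- The standard Gaussian measure on `ℝ^d`: the law of a vector with `d` independent
standard normal coordinates. -/
noncomputable def stdGaussian (d : ℕ) : Measure (EuclideanSpace ℝ (Fin d)) :=
  (Measure.pi fun _ => gaussianReal 0 1).map (MeasurableEquiv.toLp 2 (Fin d → ℝ))

section OneDim

lemma gpdf_mul_exp (c x : ℝ) :
    gaussianPDFReal 0 1 x * rexp (c * x)
      = rexp (c ^ 2 / 2) * gaussianPDFReal c 1 x := by
  simp only [gaussianPDFReal, NNReal.coe_one, mul_one, sub_zero]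
  rw [mul_comm (rexp (c^2/2)), mul_assoc, mul_assoc, ← Real.exp_add, ← Real.exp_add]
  ring_nf

lemma integral_gaussianReal_eq {E : Type*} [NormedAddCommGroup E] [NormedSpace ℝ E]
    (f : ℝ → E) :
    ∫ x, f x ∂(gaussianReal 0 1) = ∫ x, gaussianPDFReal 0 1 x • f x := by
  rw [gaussianReal_of_var_ne_zero _ one_ne_zero]
  have hmeas : Measurable fun x => (gaussianPDFReal 0 1 x).toNNReal :=
    (measurable_gaussianPDFReal 0 1).real_toNNReal
  have h : gaussianPDF 0 1 = fun x => ((gaussianPDFReal 0 1 x).toNNReal : ℝ≥0∞) := rfl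
  rw [h, integral_withDensity_eq_integral_smul hmeas]
  congr 1 with x
  rw [NNReal.smul_def, Real.coe_toNNReal _ (gaussianPDFReal_nonneg 0 1 x)]

lemma integrable_gaussianReal_iff {E : Type*} [NormedAddCommGroup E] [NormedSpace ℝ E]
    {f : ℝ → E} :
    Integrable f (gaussianReal 0 1) ↔ Integrable (fun x => gaussianPDFReal 0 1 x • f x) := by
  rw [gaussianReal_of_var_ne_zero _ one_ne_zero]
  have hmeas : Measurable fun x => (gaussianPDFReal 0 1 x).toNNReal :=
    (measurable_gaussianPDFReal 0 1).real_toNNReal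
  have h : gaussianPDF 0 1 = fun x => ((gaussianPDFReal 0 1 x).toNNReal : ℝ≥0∞) := rfl
  rw [h]
  refine Iff.trans (integrable_withDensity_iff_integrable_smul hmeas) (integrable_congr ?_)
  filter_upwards with x
  rw [NNReal.smul_def, Real.coe_toNNReal _ (gaussianPDFReal_nonneg 0 1 x)]

lemma integrable_id_mul_gpdf (c : ℝ) :
    Integrable (fun x => x * gaussianPDFReal c 1 x) := by
  have hb : (0:ℝ) < 1/2 := by norm_num
  have h1 : Integrable (fun x : ℝ => x * rexp (-(1/2) * x ^ 2)) :=
    integrable_mul_exp_neg_mul_sq hb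
  have h2 : Integrable (fun x : ℝ => c * rexp (-(1/2) * x ^ 2)) :=
    (integrable_exp_neg_mul_sq hb).const_mul c
  have h3 : Integrable (fun x : ℝ => (x + c) * rexp (-(1/2) * x ^ 2)) := by
    simpa [add_mul, Pi.add_def] using h1.add h2
  have h4 : Integrable (fun x : ℝ => x * rexp (-(1/2) * (x - c) ^ 2)) := by
    simpa using h3.comp_sub_right c
  have h5 := h4.const_mul (√(2 * π))⁻¹
  refine h5.congr (Filter.Eventually.of_forall fun x => ?_)
  simp only [gaussianPDFReal, NNReal.coe_one, mul_one]
  ring_nf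

lemma integral_id_mul_gpdf_zero :
    ∫ x, x * gaussianPDFReal 0 1 x = 0 := by
  have hodd : ∀ x : ℝ, (-x) * gaussianPDFReal 0 1 (-x) = -(x * gaussianPDFReal 0 1 x) := by
    intro x
    simp only [gaussianPDFReal, NNReal.coe_one, mul_one, sub_zero, neg_sq]
    ring
  have h := integral_neg_eq_self (fun x => x * gaussianPDFReal 0 1 x) volume
  simp only [hodd, integral_neg] at h
  linarith

lemma integral_id_mul_gpdf (c : ℝ) :
    ∫ x, x * gaussianPDFReal c 1 x = c := by
  have h := integral_add_right_eq_self (μ := volume) (fun x => x * gaussianPDFReal c 1 x) c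
  rw [← h]
  have : ∀ x : ℝ, (x + c) * gaussianPDFReal c 1 (x + c)
      = x * gaussianPDFReal 0 1 x + c * gaussianPDFReal 0 1 x := by
    intro x
    have : gaussianPDFReal c 1 (x + c) = gaussianPDFReal 0 1 x := by
      simp only [gaussianPDFReal, NNReal.coe_one, mul_one]
      ring_nf
    rw [this]; ring
  simp_rw [this]
  rw [integral_add (integrable_id_mul_gpdf 0) ((integrable_gaussianPDFReal 0 1).const_mul c),
    integral_id_mul_gpdf_zero, integral_const_mul, integral_gaussianPDFReal_eq_one 0 one_ne_zero]
  simp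

/-- integrability of `exp (c x)` against the standard Gaussian. -/
lemma integrable_exp_gauss (c : ℝ) :
    Integrable (fun x => rexp (c * x)) (gaussianReal 0 1) := by
  rw [integrable_gaussianReal_iff]
  have : Integrable (fun x => rexp (c ^ 2 / 2) * gaussianPDFReal c 1 x) :=
    (integrable_gaussianPDFReal c 1).const_mul _
  refine this.congr (Filter.Eventually.of_forall fun x => ?_)
  simp only [smul_eq_mul, ← gpdf_mul_exp]

lemma integral_exp_gauss (c : ℝ) :
    ∫ x, rexp (c * x) ∂(gaussianReal 0 1) = rexp (c ^ 2 / 2) := by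
  rw [integral_gaussianReal_eq]
  simp_rw [smul_eq_mul, gpdf_mul_exp]
  rw [integral_const_mul, integral_gaussianPDFReal_eq_one c one_ne_zero, mul_one]

lemma integrable_id_mul_exp_gauss (c : ℝ) :
    Integrable (fun x => x * rexp (c * x)) (gaussianReal 0 1) := by
  rw [integrable_gaussianReal_iff]
  have : Integrable (fun x => rexp (c ^ 2 / 2) * (x * gaussianPDFReal c 1 x)) :=
    (integrable_id_mul_gpdf c).const_mul _
  refine this.congr (Filter.Eventually.of_forall fun x => ?_)
  simp only [smul_eq_mul]
  rw [show gaussianPDFReal 0 1 x * (x * rexp (c * x))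
    = x * (gaussianPDFReal 0 1 x * rexp (c * x)) by ring, gpdf_mul_exp]
  ring

lemma integrable_abs_mul_exp_gauss (c : ℝ) :
    Integrable (fun x => |x| * rexp (c * x)) (gaussianReal 0 1) := by
  have h := (integrable_id_mul_exp_gauss c).abs
  refine h.congr (Filter.Eventually.of_forall fun x => ?_)
  simp [abs_mul, Real.abs_exp]

lemma integral_id_mul_exp_gauss (c : ℝ) :
    ∫ x, x * rexp (c * x) ∂(gaussianReal 0 1) = c * rexp (c ^ 2 / 2) := by
  rw [integral_gaussianReal_eq]
  have : ∀ x : ℝ, gaussianPDFReal 0 1 x • (x * rexp (c * x))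
      = rexp (c ^ 2 / 2) * (x * gaussianPDFReal c 1 x) := by
    intro x
    rw [smul_eq_mul, show gaussianPDFReal 0 1 x * (x * rexp (c * x))
      = x * (gaussianPDFReal 0 1 x * rexp (c * x)) by ring, gpdf_mul_exp]
    ring
  simp_rw [this]
  rw [integral_const_mul, integral_id_mul_gpdf c]
  ring

end OneDim

section PiTrick
attribute [-instance] Real.measureSpace
noncomputable local instance : MeasureSpace ℝ := ⟨gaussianReal 0 1⟩
local instance : SigmaFinite (volume : Measure ℝ) := by
  show SigmaFinite (gaussianReal 0 1); infer_instance

lemma integral_pi_gauss {d : ℕ} (f : Fin d → ℝ → ℝ) :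
    ∫ x : Fin d → ℝ, ∏ k, f k (x k) ∂(Measure.pi fun _ => gaussianReal 0 1)
      = ∏ k, ∫ s, f k s ∂(gaussianReal 0 1) := by
  have := MeasureTheory.integral_fintype_prod_eq_prod (𝕜 := ℝ) (fun k => f k) (μ := fun _ => gaussianReal 0 1)
  simpa [volume_pi] using this

lemma integrable_pi_gauss {d : ℕ} (f : Fin d → ℝ → ℝ)
    (hf : ∀ k, Integrable (f k) (gaussianReal 0 1)) :
    Integrable (fun x : Fin d → ℝ => ∏ k, f k (x k))
      (Measure.pi fun _ => gaussianReal 0 1) := by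
  have := MeasureTheory.Integrable.fintype_prod (𝕜 := ℝ) (f := fun k => f k) hf
  simpa [volume_pi] using this
end PiTrick

section PiLevel

variable {d : ℕ}

/-- key scalar computation at the pi level -/
lemma integral_exp_mul_coord (c : Fin d → ℝ) (j : Fin d) :
    ∫ x : Fin d → ℝ, (∏ k, rexp (c k * x k)) * x j ∂(Measure.pi fun _ => gaussianReal 0 1)
      = c j * rexp ((∑ k, c k ^ 2) / 2) := by
  have hprod : ∀ x : Fin d → ℝ, (∏ k, rexp (c k * x k)) * x j
      = ∏ k, (rexp (c k * x k) * (if k = j then x k else 1)) := by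
    intro x
    rw [Finset.prod_mul_distrib]
    congr 1
    simp [Finset.prod_ite_eq' Finset.univ j (fun k => x k)]
  simp_rw [hprod]
  rw [integral_pi_gauss (fun k s => rexp (c k * s) * (if k = j then s else 1))]
  have hint : ∀ k, (∫ s, rexp (c k * s) * (if k = j then s else 1) ∂(gaussianReal 0 1))
      = if k = j then c k * rexp (c k ^ 2 / 2) else rexp (c k ^ 2 / 2) := by
    intro k
    by_cases h : k = j
    · subst h
      simp only [eq_self_iff_true, if_true]
      have := integral_id_mul_exp_gauss (c k)
      rw [← this]
      congr 1 with s
      ring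
    · simp only [if_neg h, mul_one]
      exact integral_exp_gauss (c k)
  simp_rw [hint]
  have hsplit : ∀ k : Fin d, (if k = j then c k * rexp (c k ^ 2 / 2) else rexp (c k ^ 2 / 2))
      = (if k = j then c k else 1) * rexp (c k ^ 2 / 2) := by
    intro k; split <;> ring
  simp_rw [hsplit]
  rw [Finset.prod_mul_distrib, Finset.prod_ite_eq' Finset.univ j c, ← Real.exp_sum,
    Finset.sum_div]
  simp

lemma integrable_exp_mul_coord_abs (c : Fin d → ℝ) (j : Fin d) :
    Integrable (fun x : Fin d → ℝ => (∏ k, rexp (c k * x k)) * |x j|)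
      (Measure.pi fun _ => gaussianReal 0 1) := by
  have hprod : ∀ x : Fin d → ℝ, (∏ k, rexp (c k * x k)) * |x j|
      = ∏ k, (rexp (c k * x k) * (if k = j then |x k| else 1)) := by
    intro x
    rw [Finset.prod_mul_distrib]
    congr 1
    simp [Finset.prod_ite_eq' Finset.univ j (fun k => |x k|)]
  simp_rw [hprod]
  apply integrable_pi_gauss (fun k s => rexp (c k * s) * (if k = j then |s| else 1))
  intro k
  by_cases h : k = j
  · subst h
    simp only [eq_self_iff_true, if_true]
    have := integrable_abs_mul_exp_gauss (c k)
    refine this.congr (Filter.Eventually.of_forall fun x => ?_); ring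
  · simp only [if_neg h, mul_one]
    exact integrable_exp_gauss (c k)

end PiLevel

section Main

variable {d : ℕ}

lemma stdGaussian_isProb (d : ℕ) : IsProbabilityMeasure (stdGaussian d) := by
  have h : IsProbabilityMeasure (Measure.pi fun _ : Fin d => gaussianReal 0 1 :
      Measure (Fin d → ℝ)) := inferInstance
  exact Measure.isProbabilityMeasure_map (MeasurableEquiv.toLp 2 (Fin d → ℝ)).measurable.aemeasurable

lemma integral_exp_mul_coord_E (c : Fin d → ℝ) (j : Fin d) :
    ∫ t : EuclideanSpace ℝ (Fin d), (∏ k, rexp (c k * t k)) * t j ∂(stdGaussian d)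
      = c j * rexp ((∑ k, c k ^ 2) / 2) := by
  rw [_root_.stdGaussian, integral_map_equiv]
  exact integral_exp_mul_coord c j

lemma integrable_exp_mul_coord_abs_E (c : Fin d → ℝ) (j : Fin d) :
    Integrable (fun t : EuclideanSpace ℝ (Fin d) => (∏ k, rexp (c k * t k)) * |t j|)
      (stdGaussian d) := by
  rw [_root_.stdGaussian, integrable_map_equiv]
  exact integrable_exp_mul_coord_abs c j

lemma norm_le_sum_abs (t : EuclideanSpace ℝ (Fin d)) : ‖t‖ ≤ ∑ j, |t j| := by
  rw [EuclideanSpace.norm_eq]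
  have h1 : ∑ j, ‖t j‖ ^ 2 ≤ (∑ j, ‖t j‖) ^ 2 :=
    Finset.sum_sq_le_sq_sum_of_nonneg fun i _ => norm_nonneg _
  calc √(∑ j, ‖t j‖ ^ 2) ≤ √((∑ j, ‖t j‖) ^ 2) := Real.sqrt_le_sqrt h1
    _ = ∑ j, ‖t j‖ := Real.sqrt_sq (Finset.sum_nonneg fun i _ => norm_nonneg _)
    _ = ∑ j, |t j| := by simp [Real.norm_eq_abs]

lemma inner_eq_sum (t p : EuclideanSpace ℝ (Fin d)) : (inner ℝ t p : ℝ) = ∑ k, t k * p k := by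
  simp [PiLp.inner_apply, RCLike.inner_apply, conj_trivial]
  exact Finset.sum_congr rfl fun _ _ => mul_comm _ _

lemma exp_inner_eq_prod (β : ℝ) (t p : EuclideanSpace ℝ (Fin d)) :
    rexp (β * (inner ℝ t p : ℝ)) = ∏ k, rexp ((β * p k) * t k) := by
  rw [← Real.exp_sum]
  congr 1
  rw [inner_eq_sum, Finset.mul_sum]
  exact Finset.sum_congr rfl fun k _ => by ring

lemma integrable_G (β : ℝ) (p : EuclideanSpace ℝ (Fin d)) :
    Integrable (fun t : EuclideanSpace ℝ (Fin d) => rexp (β * (inner ℝ t p : ℝ)) • t)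
      (stdGaussian d) := by
  set c : Fin d → ℝ := fun k => β * p k with hc
  refine Integrable.mono'
    (g := fun t => ∑ j, (∏ k, rexp (c k * t k)) * |t j|)
    (integrable_finset_sum _ fun j _ => integrable_exp_mul_coord_abs_E c j)
    (Continuous.aestronglyMeasurable
      ((Real.continuous_exp.comp (continuous_const.mul
        (Continuous.inner continuous_id continuous_const))).smul continuous_id)) ?_
  filter_upwards with t
  rw [norm_smul, Real.norm_eq_abs, abs_of_pos (Real.exp_pos _)]
  calc rexp (β * (inner ℝ t p : ℝ)) * ‖t‖
      ≤ rexp (β * (inner ℝ t p : ℝ)) * ∑ j, |t j| :=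
        mul_le_mul_of_nonneg_left (norm_le_sum_abs t) (Real.exp_pos _).le
    _ = ∑ j, (∏ k, rexp (c k * t k)) * |t j| := by
        rw [exp_inner_eq_prod β t p, Finset.mul_sum]

lemma integrable_id_E : Integrable (fun t : EuclideanSpace ℝ (Fin d) => t) (stdGaussian d) := by
  refine Integrable.mono'
    (g := fun t => ∑ j, (∏ k, rexp ((0 : Fin d → ℝ) k * t k)) * |t j|)
    (integrable_finset_sum _ fun j _ => integrable_exp_mul_coord_abs_E 0 j)
    (Continuous.aestronglyMeasurable continuous_id) ?_
  filter_upwards with t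
  calc ‖t‖ ≤ ∑ j, |t j| := norm_le_sum_abs t
    _ = ∑ j, (∏ k, rexp ((0 : Fin d → ℝ) k * t k)) * |t j| := by
        simp

lemma integral_id_E : ∫ t : EuclideanSpace ℝ (Fin d), t ∂(stdGaussian d) = 0 := by
  ext j
  have h := (EuclideanSpace.proj (𝕜 := ℝ) j).integral_comp_comm integrable_id_E
  have h2 : ∫ t : EuclideanSpace ℝ (Fin d), t j ∂(stdGaussian d) = 0 := by
    have := integral_exp_mul_coord_E (0 : Fin d → ℝ) j
    simpa using this
  have hproj : (EuclideanSpace.proj (𝕜 := ℝ) j) (∫ t : EuclideanSpace ℝ (Fin d), t ∂(stdGaussian d)) = 0 := by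
    rw [← h]
    exact h2
  simpa using hproj

lemma integral_G (β : ℝ) (p : EuclideanSpace ℝ (Fin d)) (hp : ‖p‖ = 1) :
    ∫ t : EuclideanSpace ℝ (Fin d), rexp (β * (inner ℝ t p : ℝ)) • t ∂(stdGaussian d)
      = (β * rexp (β ^ 2 / 2)) • p := by
  set c : Fin d → ℝ := fun k => β * p k with hc
  have hsum : ∑ k, c k ^ 2 = β ^ 2 := by
    have hp2 : ∑ k, p k ^ 2 = 1 := by
      have h := real_inner_self_eq_norm_sq p
      rw [hp] at h
      have h2 : (inner ℝ p p : ℝ) = ∑ k, p k * p k := inner_eq_sum p p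
      simp only [one_pow] at h
      rw [h2] at h
      simpa [sq] using h
    calc ∑ k, c k ^ 2 = β ^ 2 * ∑ k, p k ^ 2 := by
          rw [Finset.mul_sum]; exact Finset.sum_congr rfl fun k _ => by simp [hc]; ring
      _ = β ^ 2 := by rw [hp2, mul_one]
  ext j
  have h := (EuclideanSpace.proj (𝕜 := ℝ) j).integral_comp_comm (integrable_G β p)
  have h2 : (fun t : EuclideanSpace ℝ (Fin d) =>
      (EuclideanSpace.proj (𝕜 := ℝ) j) (rexp (β * (inner ℝ t p : ℝ)) • t))
      = fun t : EuclideanSpace ℝ (Fin d) => (∏ k, rexp (c k * t k)) * t j := by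
    funext t
    rw [exp_inner_eq_prod β t p]
    rfl
  have h3 : (EuclideanSpace.proj (𝕜 := ℝ) j)
      (∫ t : EuclideanSpace ℝ (Fin d), rexp (β * (inner ℝ t p : ℝ)) • t ∂(stdGaussian d))
      = c j * rexp (β ^ 2 / 2) := by
    rw [← h]
    rw [show (∫ t, (EuclideanSpace.proj (𝕜 := ℝ) j) (rexp (β * (inner ℝ t p : ℝ)) • t) ∂(stdGaussian d))
      = ∫ t : EuclideanSpace ℝ (Fin d), (∏ k, rexp (c k * t k)) * t j ∂(stdGaussian d) from by rw [h2]]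
    rw [integral_exp_mul_coord_E c j, hsum]
  have h4 : (EuclideanSpace.proj (𝕜 := ℝ) j)
      (∫ t : EuclideanSpace ℝ (Fin d), rexp (β * (inner ℝ t p : ℝ)) • t ∂(stdGaussian d))
      = (∫ t : EuclideanSpace ℝ (Fin d), rexp (β * (inner ℝ t p : ℝ)) • t ∂(stdGaussian d)) j := rfl
  rw [← h4, h3]
  simp only [PiLp.smul_apply, smul_eq_mul, hc]
  ring

end Main

/-- **Mean of a trigram in the AttEST model.**
Let `d, m` be positive integers, `α ∈ (1/2, 1]`, `β ∈ ℝ`, `Z > 0`, and `p ∈ ℝ^d` a unit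
vector.  If `t` is sampled from the standard Gaussian measure `γ_d` on `ℝ^d`, then the
vector-valued expectation `E[(α * m * exp (β * ⟪t, p⟫) / Z + (1 - α)) • t]` equals
`ρ • p` where `ρ = m * α * β * exp (β ^ 2 / 2) / Z`.  In particular the uniform (noise)
component of the AttEST mixture contributes zero to the mean. -/
theorem attest_trigram_mean (d m : ℕ) (hd : 0 < d) (hm : 0 < m)
    (α : ℝ) (hα : α ∈ Set.Ioc (1 / 2 : ℝ) 1) (β : ℝ) (Z : ℝ) (hZ : 0 < Z)
    (p : EuclideanSpace ℝ (Fin d)) (hp : ‖p‖ = 1) :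
    ∫ t, (α * m * Real.exp (β * inner ℝ t p) / Z + (1 - α)) • t ∂(stdGaussian d)
      = ((m : ℝ) * α * β * Real.exp (β ^ 2 / 2) / Z) • p := by
  have hfun : ∀ t : EuclideanSpace ℝ (Fin d),
      (α * m * Real.exp (β * inner ℝ t p) / Z + (1 - α)) • t
        = (α * m / Z) • (Real.exp (β * (inner ℝ t p : ℝ)) • t) + (1 - α) • t := by
    intro t
    rw [add_smul, smul_smul]
    congr 2
    ring
  simp_rw [hfun]
  have h1 : Integrable (fun t : EuclideanSpace ℝ (Fin d) =>
      (α * (m : ℝ) / Z) • (Real.exp (β * (inner ℝ t p : ℝ)) • t)) (stdGaussian d) :=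
    (integrable_G β p).smul (α * (m : ℝ) / Z)
  have h2 : Integrable (fun t : EuclideanSpace ℝ (Fin d) => (1 - α) • t) (stdGaussian d) :=
    integrable_id_E.smul (1 - α)
  rw [integral_add h1 h2, integral_smul, integral_smul, integral_G β p hp, integral_id_E,
    smul_zero, add_zero, smul_smul]
  congr 1
  ring
end

section
/- Let d be a positive integer, u, v ∈ ℝ^d, constants C₁ > 0, C₂ > 0, error parameters 0 ≤ ε', ε'' ≤ 1/2, and positive reals P₁₂, P₁, P₂ satisfying: (1−ε')·C₁C₂·exp(‖u+v‖²/(2d)) ≤ P₁₂ ≤ (1+ε')·C₁C₂·exp(‖u+v‖²/(2d)), (1−ε'')·C₁·exp(‖u‖²/(2d)) ≤ P₁ ≤ (1+ε'')·C₁·exp(‖u‖²/(2d)), and (1−ε'')·C₂·exp(‖v‖²/(2d)) ≤ P₂ ≤ (1+ε'')·C₂·exp(‖v‖²/(2d)). Then |log(P₁₂/(P₁·P₂)) − ⟨u, v⟩/d| ≤ 2ε' + 4ε''. -/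
lemma log_approx_bound (A P ε : ℝ) (hA : 0 < A) (hP : 0 < P)
    (hε0 : 0 ≤ ε) (hε1 : ε ≤ 1 / 2)
    (hl : (1 - ε) * A ≤ P) (hu : P ≤ (1 + ε) * A) :
    |Real.log P - Real.log A| ≤ 2 * ε := by
  have h1ε : (0:ℝ) < 1 - ε := by linarith
  have h1ε' : (0:ℝ) < 1 + ε := by linarith
  rw [abs_le]
  constructor
  · have hlog : Real.log ((1 - ε) * A) ≤ Real.log P := Real.log_le_log (by positivity) hl
    rw [Real.log_mul (ne_of_gt h1ε) (ne_of_gt hA)] at hlog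
    have : -(2 * ε) ≤ Real.log (1 - ε) := by
      have hinv : Real.log (1 - ε)⁻¹ ≤ (1 - ε)⁻¹ - 1 :=
        Real.log_le_sub_one_of_pos (by positivity)
      rw [Real.log_inv] at hinv
      have h2 : (1 - ε)⁻¹ - 1 = ε / (1 - ε) := by field_simp; ring
      have h3 : ε / (1 - ε) ≤ 2 * ε := by
        rw [div_le_iff₀ h1ε]; nlinarith
      linarith
    linarith
  · have hlog : Real.log P ≤ Real.log ((1 + ε) * A) := Real.log_le_log hP hu
    rw [Real.log_mul (ne_of_gt h1ε') (ne_of_gt hA)] at hlog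
    have : Real.log (1 + ε) ≤ 2 * ε := by
      have := Real.log_le_sub_one_of_pos h1ε'
      linarith
    linarith

set_option maxHeartbeats 1000000 in
/-- **PMI equals the scaled inner product of query embeddings.**
Let `u, v ∈ ℝ^d` be query embeddings, `C₁, C₂ > 0`, `0 ≤ ε', ε'' ≤ 1/2`, and suppose the
co-occurrence probability `P₁₂` and the single-query probabilities `P₁, P₂` satisfy the
multiplicative bounds of the AttEST co-occurrence theorems.  Then
`|log (P₁₂ / (P₁ * P₂)) - ⟪u, v⟫ / d| ≤ 2 ε' + 4 ε''`. -/
theorem pmi_eq_inner_product (d : ℕ) (hd : 0 < d)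
    (u v : EuclideanSpace ℝ (Fin d)) (C₁ C₂ : ℝ) (hC₁ : 0 < C₁) (hC₂ : 0 < C₂)
    (ε' ε'' : ℝ) (hε'0 : 0 ≤ ε') (hε'1 : ε' ≤ 1 / 2) (hε''0 : 0 ≤ ε'') (hε''1 : ε'' ≤ 1 / 2)
    (P₁₂ P₁ P₂ : ℝ) (hP₁₂ : 0 < P₁₂) (hP₁ : 0 < P₁) (hP₂ : 0 < P₂)
    (h12l : (1 - ε') * (C₁ * C₂ * Real.exp (‖u + v‖ ^ 2 / (2 * d))) ≤ P₁₂)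
    (h12u : P₁₂ ≤ (1 + ε') * (C₁ * C₂ * Real.exp (‖u + v‖ ^ 2 / (2 * d))))
    (h1l : (1 - ε'') * (C₁ * Real.exp (‖u‖ ^ 2 / (2 * d))) ≤ P₁)
    (h1u : P₁ ≤ (1 + ε'') * (C₁ * Real.exp (‖u‖ ^ 2 / (2 * d))))
    (h2l : (1 - ε'') * (C₂ * Real.exp (‖v‖ ^ 2 / (2 * d))) ≤ P₂)
    (h2u : P₂ ≤ (1 + ε'') * (C₂ * Real.exp (‖v‖ ^ 2 / (2 * d)))) :
    |Real.log (P₁₂ / (P₁ * P₂)) - (inner ℝ u v : ℝ) / d| ≤ 2 * ε' + 4 * ε'' := by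
  have hd' : (0:ℝ) < d := Nat.cast_pos.mpr hd
  set A₁₂ := C₁ * C₂ * Real.exp (‖u + v‖ ^ 2 / (2 * d)) with hA₁₂def
  set A₁ := C₁ * Real.exp (‖u‖ ^ 2 / (2 * d)) with hA₁def
  set A₂ := C₂ * Real.exp (‖v‖ ^ 2 / (2 * d)) with hA₂def
  have hA₁₂ : 0 < A₁₂ := by positivity
  have hA₁ : 0 < A₁ := by positivity
  have hA₂ : 0 < A₂ := by positivity
  have e12 := log_approx_bound A₁₂ P₁₂ ε' hA₁₂ hP₁₂ hε'0 hε'1 h12l h12u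
  have e1 := log_approx_bound A₁ P₁ ε'' hA₁ hP₁ hε''0 hε''1 h1l h1u
  have e2 := log_approx_bound A₂ P₂ ε'' hA₂ hP₂ hε''0 hε''1 h2l h2u
  have hnorm : ‖u + v‖ ^ 2 = ‖u‖ ^ 2 + 2 * (inner ℝ u v : ℝ) + ‖v‖ ^ 2 :=
    norm_add_sq_real u v
  have hkey : Real.log A₁₂ - Real.log A₁ - Real.log A₂ = (inner ℝ u v : ℝ) / d := by
    rw [hA₁₂def, hA₁def, hA₂def, Real.log_mul (by positivity) (Real.exp_ne_zero _),
      Real.log_mul (by positivity) (Real.exp_ne_zero _),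
      Real.log_mul (ne_of_gt hC₁) (ne_of_gt hC₂),
      Real.log_mul (ne_of_gt hC₂) (Real.exp_ne_zero _),
      Real.log_exp, Real.log_exp, Real.log_exp, hnorm]
    field_simp
    ring
  have hsplit : Real.log (P₁₂ / (P₁ * P₂)) = Real.log P₁₂ - Real.log P₁ - Real.log P₂ := by
    rw [Real.log_div (ne_of_gt hP₁₂) (by positivity),
      Real.log_mul (ne_of_gt hP₁) (ne_of_gt hP₂)]
    ring
  rw [hsplit, ← hkey]
  have : Real.log P₁₂ - Real.log P₁ - Real.log P₂ -
      (Real.log A₁₂ - Real.log A₁ - Real.log A₂) =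
      (Real.log P₁₂ - Real.log A₁₂) - (Real.log P₁ - Real.log A₁) -
      (Real.log P₂ - Real.log A₂) := by ring
  rw [this]
  have h12a := abs_le.mp e12
  have h1a := abs_le.mp e1
  have h2a := abs_le.mp e2
  rw [abs_le]
  constructor <;> [nlinarith [h12a.1, h1a.2, h2a.2]; nlinarith [h12a.2, h1a.1, h2a.1]]
end
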